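/- Assume the setting and hypothesis (A). Then: (1) l₀ := inf_{x ∈ M} m(B(x,ξ₀)) > 0; (2) every open set 𝒰_i of every s-invariant domain contains an open ball of radius ξ₀, hence m(𝒰_i) ≥ l₀; (3) the period of every s-invariant domain is at most 1/l₀; (4) there are only finitely many minimal domains up to cyclic shift, indeed at most 1/l₀ of them. -/
import Mathlib


open MeasureTheory Metric Set Filter Topology

noncomputable section

/-- The parameter space `T`: the closed `ε`-ball around `a` in `ℝⁿ`. -/
abbrev PSpace (n : ℕ) (a : EuclideanSpace ℝ (Fin n)) (ε : ℝ) : Type _ :=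
  ↥(Metric.closedBall a ε)

/-- Perturbed iterates: `pIter f k z t = f_{t_k} ∘ ⋯ ∘ f_{t_1} (z)`
(the sequence `t` is indexed from `0` here). -/
def pIter {M T : Type*} (f : M → T → M) : ℕ → M → (ℕ → T) → M
  | 0, z, _ => z
  | k + 1, z, t => f (pIter f k z t) (t k)

/-- An s-invariant domain for the randomly perturbed system: a finite tuple of
nonempty open sets with pairwise disjoint closures, permuted cyclically by all
perturbed iterates. -/
structure SInvDomain {M T : Type*} [TopologicalSpace M] (f : M → T → M) where
  r : ℕ
  r_pos : 0 < r
  U : Fin r → Set M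
  isOpen : ∀ i, IsOpen (U i)
  nonempty : ∀ i, (U i).Nonempty
  separated : ∀ i j : Fin r, i ≠ j → closure (U i) ∩ closure (U j) = ∅
  invariant : ∀ k : ℕ, 1 ≤ k → ∀ i : Fin r, ∀ z ∈ U i, ∀ t : ℕ → T,
    pIter f k z t ∈ U ⟨((i : ℕ) + k) % r, Nat.mod_lt _ r_pos⟩

/-- The union `⋃D` of the open sets forming an s-invariant domain. -/
def SInvDomain.carrier {M T : Type*} [TopologicalSpace M] {f : M → T → M}
    (D : SInvDomain f) : Set M := ⋃ i, D.U i

/-- The partial order `D ⪯ D'` on s-invariant domains. -/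
def DomLE {M T : Type*} [TopologicalSpace M] {f : M → T → M}
    (D D' : SInvDomain f) : Prop :=
  ∃ i i' : ℕ, ∀ k : ℕ, 1 ≤ k →
    D.U ⟨(i + k) % D.r, Nat.mod_lt _ D.r_pos⟩ ⊆ D'.U ⟨(i' + k) % D'.r, Nat.mod_lt _ D'.r_pos⟩

/-- Two s-invariant domains coincide up to cyclic shift. -/
def CyclicEq {M T : Type*} [TopologicalSpace M] {f : M → T → M}
    (D D' : SInvDomain f) : Prop :=
  ∃ i i' : ℕ, ∀ k : ℕ, 1 ≤ k →
    D.U ⟨(i + k) % D.r, Nat.mod_lt _ D.r_pos⟩ = D'.U ⟨(i' + k) % D'.r, Nat.mod_lt _ D'.r_pos⟩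

/-- A minimal invariant domain. -/
def MinimalDom {M T : Type*} [TopologicalSpace M] {f : M → T → M}
    (D : SInvDomain f) : Prop :=
  ∀ D' : SInvDomain f, DomLE D' D → CyclicEq D' D

/-- A c-invariant (completely invariant) set. -/
def CInvariant {M T : Type*} (f : M → T → M) (C : Set M) : Prop :=
  ∀ x ∈ C, ∀ t : ℕ → T, ∀ k : ℕ, 1 ≤ k → pIter f k x t ∈ C

/-- The ω-limit of a point under a fixed perturbation vector. -/
def omegaPt {M T : Type*} [TopologicalSpace M] (f : M → T → M) (z : M) (t : ℕ → T) : Set M :=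
  {w | ∃ nseq : ℕ → ℕ, StrictMono nseq ∧
    Tendsto (fun j => pIter f (nseq j) z t) atTop (𝓝 w)}

/-- The ω-limit of a set under a fixed perturbation vector. -/
def omegaSet {M T : Type*} [TopologicalSpace M] (f : M → T → M) (U : Set M) (t : ℕ → T) :
    Set M :=
  {w | ∃ (u : ℕ → M) (nseq : ℕ → ℕ), (∀ j, u j ∈ U) ∧ StrictMono nseq ∧
    Tendsto (fun j => pIter f (nseq j) (u j) t) atTop (𝓝 w)}

/-- The ω-limit of a set under all perturbation vectors. -/
def omegaSetAll {M T : Type*} [TopologicalSpace M] (f : M → T → M) (U : Set M) : Set M :=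
  {w | ∃ (u : ℕ → M) (ts : ℕ → ℕ → T) (nseq : ℕ → ℕ), (∀ j, u j ∈ U) ∧ StrictMono nseq ∧
    Tendsto (fun j => pIter f (nseq j) (u j) (ts j)) atTop (𝓝 w)}

/-- A stationary probability measure for the perturbed system. -/
def Stationary {M T : Type*} [TopologicalSpace M] [MeasurableSpace M] [MeasurableSpace T]
    (f : M → T → M) (ν : Measure T) (μ : Measure M) : Prop :=
  ∀ φ : C(M, ℝ), ∫ z, (∫ t, φ (f z t) ∂ν) ∂μ = ∫ z, φ z ∂μ

/-- The skew product map `S(z,t) = (f_{t₁}(z), σ t)`. -/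
def skewProd {M T : Type*} (f : M → T → M) : M × (ℕ → T) → M × (ℕ → T) :=
  fun p => (f p.1 (p.2 0), fun i => p.2 (i + 1))

/-- The support of a measure: points all of whose open neighbourhoods have
positive measure. -/
def msupport {M : Type*} [TopologicalSpace M] [MeasurableSpace M] (μ : Measure M) : Set M :=
  {x | ∀ O : Set M, IsOpen O → x ∈ O → 0 < μ O}

/-- The ergodic basin `E(μ)` of a stationary measure: points whose time averages along
`ν^∞`-a.e. perturbed orbit converge to the space average of every continuous function. -/
def basin {M T : Type*} [TopologicalSpace M] [MeasurableSpace M] [MeasurableSpace T]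
    (f : M → T → M) (νinf : Measure (ℕ → T)) (μ : Measure M) : Set M :=
  {x | ∀ᵐ t ∂νinf, ∀ φ : C(M, ℝ),
    Tendsto (fun nn : ℕ => (nn : ℝ)⁻¹ * ∑ j ∈ Finset.range nn, φ (pIter f j x t))
      atTop (𝓝 (∫ z, φ z ∂μ))}



lemma aux_inf_pos {M : Type*} [MetricSpace M] [CompactSpace M] [Nonempty M]
    [MeasurableSpace M] (m : Measure M)
    (hmpos : ∀ O : Set M, IsOpen O → O.Nonempty → 0 < m O)
    {ξ₀ : ℝ} (hξ₀ : 0 < ξ₀) : 0 < ⨅ x : M, m (Metric.ball x ξ₀) := by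
  obtain ⟨s, hs⟩ := (isCompact_univ (X := M)).elim_finite_subcover
    (fun x : M => Metric.ball x (ξ₀ / 2)) (fun x => isOpen_ball)
    (fun x _ => Set.mem_iUnion.mpr ⟨x, mem_ball_self (by linarith)⟩)
  have hsne : s.Nonempty := by
    rcases Finset.eq_empty_or_nonempty s with h | h
    · exfalso
      obtain ⟨x⟩ := ‹Nonempty M›
      have := hs (Set.mem_univ x)
      simp [h] at this
    · exact h
  have hcpos : 0 < s.inf' hsne (fun x => m (Metric.ball x (ξ₀ / 2))) := by
    rw [Finset.lt_inf'_iff]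
    exact fun y _ => hmpos _ isOpen_ball ⟨y, mem_ball_self (by linarith)⟩
  refine lt_of_lt_of_le hcpos (le_iInf fun x => ?_)
  have hx := hs (Set.mem_univ x)
  rw [Set.mem_iUnion₂] at hx
  obtain ⟨y, hy, hxy⟩ := hx
  calc s.inf' hsne (fun x => m (Metric.ball x (ξ₀ / 2)))
      ≤ m (Metric.ball y (ξ₀/2)) := Finset.inf'_le _ hy
    _ ≤ m (Metric.ball x ξ₀) := by
        apply measure_mono
        intro w hw
        rw [Metric.mem_ball] at *
        have h1 := Metric.mem_ball.mp hxy
        calc dist w x ≤ dist w y + dist y x := dist_triangle _ _ _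
          _ < ξ₀ := by rw [dist_comm y x]; linarith

lemma aux_mod_dvd (a b L r : ℕ) (h : r ∣ L) : (a + b % L) % r = (a + b) % r := by
  conv_lhs => rw [Nat.add_mod, Nat.mod_mod_of_dvd b h, ← Nat.add_mod]

lemma myCyclicEq_symm {M T : Type*} [TopologicalSpace M] {f : M → T → M}
    {D D' : SInvDomain f} (h : CyclicEq D D') : CyclicEq D' D := by
  obtain ⟨i, i', h⟩ := h
  exact ⟨i', i, fun k hk => (h k hk).symm⟩

lemma myCyclicEq_trans {M T : Type*} [TopologicalSpace M] {f : M → T → M}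
    {D E D' : SInvDomain f} (h1 : CyclicEq D E) (h2 : CyclicEq E D') : CyclicEq D D' := by
  obtain ⟨p, q, h1⟩ := h1
  obtain ⟨s, u, h2⟩ := h2
  set c := q + (E.r - s % E.r) with hc
  refine ⟨p, u + c, fun k hk => ?_⟩
  have hidx : (s + (k + c)) % E.r = (q + k) % E.r := by
    obtain ⟨A, hA⟩ := Nat.dvd_sub_mod (n := E.r) s
    have h2' : s % E.r < E.r := Nat.mod_lt _ E.r_pos
    have h3' : s % E.r ≤ s := Nat.mod_le s E.r
    have hs : s + (k + c) = (q + k) + E.r * (A + 1) := by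
      rw [Nat.mul_add, Nat.mul_one, hc]
      set B := E.r * A with hB
      omega
    rw [hs, Nat.add_mul_mod_self_left]
  calc D.U ⟨(p + k) % D.r, Nat.mod_lt _ D.r_pos⟩
      = E.U ⟨(q + k) % E.r, Nat.mod_lt _ E.r_pos⟩ := h1 k hk
    _ = E.U ⟨(s + (k + c)) % E.r, Nat.mod_lt _ E.r_pos⟩ := congrArg E.U (Fin.ext hidx.symm)
    _ = D'.U ⟨(u + (k + c)) % D'.r, Nat.mod_lt _ D'.r_pos⟩ := h2 (k + c) (by omega)
    _ = D'.U ⟨(u + c + k) % D'.r, Nat.mod_lt _ D'.r_pos⟩ :=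
        congrArg D'.U (Fin.ext (by rw [show u + (k + c) = u + c + k from by ring]))

lemma finMk_congr {n a b : ℕ} (ha : a < n) (hb : b < n) (h : a = b) :
    (⟨a, ha⟩ : Fin n) = ⟨b, hb⟩ := Fin.ext h

lemma exists_common_sub {M T : Type*} [TopologicalSpace M] {f : M → T → M}
    (t₀ : T) (D D' : SInvDomain f) {x : M} {p : Fin D.r} {q : Fin D'.r}
    (hx : x ∈ D.U p) (hx' : x ∈ D'.U q) :
    ∃ E : SInvDomain f, DomLE E D ∧ DomLE E D' := by
  have hL : 0 < Nat.lcm D.r D'.r := Nat.lcm_pos D.r_pos D'.r_pos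
  set L := Nat.lcm D.r D'.r with hLdef
  set V : Fin L → Set M := fun k =>
    D.U ⟨((p : ℕ) + 1 + k) % D.r, Nat.mod_lt _ D.r_pos⟩ ∩
    D'.U ⟨((q : ℕ) + 1 + k) % D'.r, Nat.mod_lt _ D'.r_pos⟩ with hV
  have key : ∀ k l : Fin L, ((p : ℕ) + 1 + k) % D.r = ((p : ℕ) + 1 + l) % D.r →
      ((q : ℕ) + 1 + k) % D'.r = ((q : ℕ) + 1 + l) % D'.r → k = l := by
    intro k l h1 h2
    have m1 : (k : ℕ) ≡ l [MOD D.r] := Nat.ModEq.add_left_cancel' _ h1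
    have m2 : (k : ℕ) ≡ l [MOD D'.r] := Nat.ModEq.add_left_cancel' _ h2
    rcases le_total (k : ℕ) l with hkl | hkl
    · have d1 : D.r ∣ (l : ℕ) - k := (Nat.modEq_iff_dvd' hkl).mp m1
      have d2 : D'.r ∣ (l : ℕ) - k := (Nat.modEq_iff_dvd' hkl).mp m2
      have := Nat.eq_zero_of_dvd_of_lt (Nat.lcm_dvd d1 d2)
      have hl := l.isLt
      by_cases hz : (l : ℕ) - k = 0
      · exact Fin.ext (by omega)
      · exact absurd (this (by omega)) hz
    · have d1 : D.r ∣ (k : ℕ) - l := (Nat.modEq_iff_dvd' hkl).mp m1.symm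
      have d2 : D'.r ∣ (k : ℕ) - l := (Nat.modEq_iff_dvd' hkl).mp m2.symm
      have := Nat.eq_zero_of_dvd_of_lt (Nat.lcm_dvd d1 d2)
      have hl := k.isLt
      by_cases hz : (k : ℕ) - l = 0
      · exact Fin.ext (by omega)
      · exact absurd (this (by omega)) hz
  refine ⟨⟨L, hL, V, ?_, ?_, ?_, ?_⟩, ⟨0, (p : ℕ) + 1, ?_⟩, ⟨0, (q : ℕ) + 1, ?_⟩⟩
  · exact fun k => (D.isOpen _).inter (D'.isOpen _)
  · -- nonempty
    intro k
    refine ⟨pIter f ((k : ℕ) + 1) x (fun _ => t₀), ?_, ?_⟩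
    · have := D.invariant ((k : ℕ) + 1) (Nat.le_add_left 1 _) p x hx (fun _ => t₀)
      have hidx : ((p:ℕ) + ((k:ℕ)+1)) % D.r = ((p:ℕ)+1+(k:ℕ)) % D.r := by
        rw [show (p:ℕ)+((k:ℕ)+1) = (p:ℕ)+1+(k:ℕ) from by ring]
      exact congrArg D.U (finMk_congr (Nat.mod_lt _ D.r_pos) (Nat.mod_lt _ D.r_pos) hidx) ▸ this
    · have := D'.invariant ((k : ℕ) + 1) (Nat.le_add_left 1 _) q x hx' (fun _ => t₀)
      have hidx : ((q:ℕ) + ((k:ℕ)+1)) % D'.r = ((q:ℕ)+1+(k:ℕ)) % D'.r := by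
        rw [show (q:ℕ)+((k:ℕ)+1) = (q:ℕ)+1+(k:ℕ) from by ring]
      exact congrArg D'.U (finMk_congr (Nat.mod_lt _ D'.r_pos) (Nat.mod_lt _ D'.r_pos) hidx) ▸ this
  · -- separated
    intro k l hkl
    by_cases h1 : ((p : ℕ) + 1 + k) % D.r = ((p : ℕ) + 1 + l) % D.r
    · have h2 : ((q : ℕ) + 1 + k) % D'.r ≠ ((q : ℕ) + 1 + l) % D'.r :=
        fun h2 => hkl (key k l h1 h2)
      have hsep := D'.separated ⟨((q:ℕ)+1+k) % D'.r, Nat.mod_lt _ D'.r_pos⟩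
        ⟨((q:ℕ)+1+l) % D'.r, Nat.mod_lt _ D'.r_pos⟩ (fun h => h2 (congrArg Fin.val h))
      refine Set.subset_empty_iff.mp ?_
      rw [← hsep]
      exact Set.inter_subset_inter (closure_mono Set.inter_subset_right)
        (closure_mono Set.inter_subset_right)
    · have hsep := D.separated ⟨((p:ℕ)+1+k) % D.r, Nat.mod_lt _ D.r_pos⟩
        ⟨((p:ℕ)+1+l) % D.r, Nat.mod_lt _ D.r_pos⟩ (fun h => h1 (congrArg Fin.val h))
      refine Set.subset_empty_iff.mp ?_
      rw [← hsep]
      exact Set.inter_subset_inter (closure_mono Set.inter_subset_left)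
        (closure_mono Set.inter_subset_left)
  · -- invariant
    intro j hj k z hz t
    have hD := D.invariant j hj _ z hz.1 t
    have hD' := D'.invariant j hj _ z hz.2 t
    have e1 : (((p : ℕ) + 1 + k) % D.r + j) % D.r = ((p : ℕ) + 1 + ((k : ℕ) + j) % L) % D.r := by
      rw [Nat.mod_add_mod, aux_mod_dvd _ _ _ _ (Nat.dvd_lcm_left D.r D'.r), ← Nat.add_assoc]
    have e2 : (((q : ℕ) + 1 + k) % D'.r + j) % D'.r = ((q : ℕ) + 1 + ((k : ℕ) + j) % L) % D'.r := by
      rw [Nat.mod_add_mod, aux_mod_dvd _ _ _ _ (Nat.dvd_lcm_right D.r D'.r), ← Nat.add_assoc]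
    exact ⟨congrArg D.U (finMk_congr (Nat.mod_lt _ D.r_pos) (Nat.mod_lt _ D.r_pos) e1) ▸ hD,
      congrArg D'.U (finMk_congr (Nat.mod_lt _ D'.r_pos) (Nat.mod_lt _ D'.r_pos) e2) ▸ hD'⟩
  · -- DomLE E D
    intro k hk w hw
    have e1 : ((p : ℕ) + 1 + (0 + k) % L) % D.r = ((p : ℕ) + 1 + k) % D.r := by
      rw [Nat.zero_add, aux_mod_dvd _ _ _ _ (Nat.dvd_lcm_left D.r D'.r)]
    exact congrArg D.U (finMk_congr (Nat.mod_lt _ D.r_pos) (Nat.mod_lt _ D.r_pos) e1) ▸ hw.1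
  · -- DomLE E D'
    intro k hk w hw
    have e2 : ((q : ℕ) + 1 + (0 + k) % L) % D'.r = ((q : ℕ) + 1 + k) % D'.r := by
      rw [Nat.zero_add, aux_mod_dvd _ _ _ _ (Nat.dvd_lcm_right D.r D'.r)]
    exact congrArg D'.U (finMk_congr (Nat.mod_lt _ D'.r_pos) (Nat.mod_lt _ D'.r_pos) e2) ▸ hw.2

/-- Under hypothesis (A): (1) `l₀ := inf_x m(B(x,ξ₀)) > 0`; (2) every
open set of every s-invariant domain contains a `ξ₀`-ball, hence has measure `≥ l₀`;
(3) the period of every s-invariant domain is at most `1/l₀`; (4) any family of pairwise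
non-cyclically-equal minimal domains has at most `1/l₀` members. -/
theorem statement10
    (n : ℕ) (hn : 1 ≤ n) (a : EuclideanSpace ℝ (Fin n)) (ε : ℝ) (hε : 0 < ε)
    (a₀ : PSpace n a ε) (ha₀ : (a₀ : EuclideanSpace ℝ (Fin n)) = a)
    (ν : Measure (PSpace n a ε))
    (hν : ν = (volume (Metric.closedBall a ε))⁻¹ •
      ((volume : Measure (EuclideanSpace ℝ (Fin n))).comap Subtype.val))
    (νinf : Measure (ℕ → PSpace n a ε)) (hprobν : IsProbabilityMeasure νinf)
    (hνinf : ∀ k : ℕ, νinf.map (fun t (i : Fin k) => t i) = Measure.pi fun _ => ν)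
    (M : Type*) [MetricSpace M] [CompactSpace M] [MeasurableSpace M] [BorelSpace M]
    (m : Measure M) (hmprob : IsProbabilityMeasure m)
    (hmpos : ∀ O : Set M, IsOpen O → O.Nonempty → 0 < m O)
    (f : M → PSpace n a ε → M)
    (hfc : Continuous fun p : M × PSpace n a ε => f p.1 p.2)
    (hfh : ∀ t : PSpace n a ε, IsHomeomorph fun z : M => f z t)
    (hfnull : ∀ (t : PSpace n a ε) (A : Set M), m A = 0 →
      m ((fun z => f z t) '' A) = 0 ∧ m ((fun z => f z t) ⁻¹' A) = 0)
    (K : ℕ) (ξ₀ : ℝ) (hξ₀ : 0 < ξ₀)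
    (hypA : ∀ k : ℕ, K ≤ k → ∀ x : M,
      Metric.ball (pIter f k x fun _ => a₀) ξ₀ ⊆ Set.range (pIter f k x))
    : 0 < (⨅ x : M, m (Metric.ball x ξ₀)) ∧
      (∀ D : SInvDomain f, ∀ i : Fin D.r,
        (∃ x : M, Metric.ball x ξ₀ ⊆ D.U i) ∧ (⨅ x : M, m (Metric.ball x ξ₀)) ≤ m (D.U i)) ∧
      (∀ D : SInvDomain f, (D.r : ENNReal) ≤ 1 / ⨅ x : M, m (Metric.ball x ξ₀)) ∧
      ∀ (N : ℕ) (Ds : Fin N → SInvDomain f), (∀ i, MinimalDom (Ds i)) →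
        (∀ i j, i ≠ j → ¬ CyclicEq (Ds i) (Ds j)) →
        (N : ENNReal) ≤ 1 / ⨅ x : M, m (Metric.ball x ξ₀) := by
  have hMne : Nonempty M := by
    by_contra h
    rw [not_nonempty_iff] at h
    have h1 : (Set.univ : Set M) = ∅ := Set.univ_eq_empty_iff.mpr h
    have h2 : m Set.univ = 1 := measure_univ
    rw [h1, measure_empty] at h2
    exact zero_ne_one h2
  set l₀ := ⨅ x : M, m (Metric.ball x ξ₀) with hl₀
  have hl₀pos : 0 < l₀ := aux_inf_pos m hmpos hξ₀
  -- Part 2: each Uᵢ of an s-invariant domain contains a ξ₀-ball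
  have part2 : ∀ (D : SInvDomain f) (i : Fin D.r), ∃ x : M, Metric.ball x ξ₀ ⊆ D.U i := by
    intro D i
    obtain ⟨z, hz⟩ := D.nonempty i
    have hk1 : 1 ≤ D.r * (K + 1) := Nat.mul_pos D.r_pos (Nat.succ_pos K)
    have hkK : K ≤ D.r * (K + 1) := by
      have := Nat.le_mul_of_pos_left (K + 1) D.r_pos
      omega
    refine ⟨pIter f (D.r * (K + 1)) z (fun _ => a₀), fun w hw => ?_⟩
    obtain ⟨t, ht⟩ := hypA (D.r * (K + 1)) hkK z hw
    have hmem := D.invariant (D.r * (K + 1)) hk1 i z hz t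
    have hidx : ((i : ℕ) + D.r * (K + 1)) % D.r = (i : ℕ) := by
      rw [Nat.add_mul_mod_self_left, Nat.mod_eq_of_lt i.isLt]
    rw [← ht]
    have : (⟨((i : ℕ) + D.r * (K + 1)) % D.r, Nat.mod_lt _ D.r_pos⟩ : Fin D.r) = i :=
      Fin.ext hidx
    exact this ▸ hmem
  have part2le : ∀ (D : SInvDomain f) (i : Fin D.r), l₀ ≤ m (D.U i) := by
    intro D i
    obtain ⟨x, hx⟩ := part2 D i
    exact le_trans (iInf_le _ x) (measure_mono hx)
  -- generic counting lemma
  have hcount : ∀ (N : ℕ) (s : Fin N → Set M), (∀ i, IsOpen (s i)) →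
      Pairwise (Function.onFun Disjoint s) → (∀ i, l₀ ≤ m (s i)) →
      (N : ENNReal) ≤ 1 / l₀ := by
    intro N s hopen hdisj hle
    have h1 : (N : ENNReal) * l₀ ≤ 1 := by
      calc (N : ENNReal) * l₀ = ∑ _i : Fin N, l₀ := by
            rw [Finset.sum_const, Finset.card_univ, Fintype.card_fin, nsmul_eq_mul]
        _ ≤ ∑ i : Fin N, m (s i) := Finset.sum_le_sum (fun i _ => hle i)
        _ = ∑' i : Fin N, m (s i) := (tsum_fintype _).symm
        _ = m (⋃ i, s i) := (measure_iUnion hdisj (fun i => (hopen i).measurableSet)).symm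
        _ ≤ m Set.univ := measure_mono (Set.subset_univ _)
        _ = 1 := measure_univ
    exact (ENNReal.le_div_iff_mul_le (Or.inl hl₀pos.ne') (Or.inr ENNReal.one_ne_top)).mpr h1
  refine ⟨hl₀pos, fun D i => ⟨part2 D i, part2le D i⟩, ?_, ?_⟩
  · -- Part 3
    intro D
    refine hcount D.r D.U D.isOpen ?_ (part2le D)
    intro i j hij
    rw [Function.onFun, Set.disjoint_iff_inter_eq_empty]
    refine Set.subset_empty_iff.mp ?_
    rw [← D.separated i j hij]
    exact Set.inter_subset_inter subset_closure subset_closure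
  · -- Part 4
    intro N Ds hmin hne
    refine hcount N (fun i => (Ds i).carrier) (fun i => isOpen_iUnion (Ds i).isOpen) ?_ ?_
    · intro i j hij
      rw [Function.onFun]
      by_contra hcon
      obtain ⟨x, hx1, hx2⟩ := Set.not_disjoint_iff.mp hcon
      simp only [SInvDomain.carrier, Set.mem_iUnion] at hx1 hx2
      obtain ⟨p, hp⟩ := hx1
      obtain ⟨q, hq⟩ := hx2
      obtain ⟨E, hE1, hE2⟩ := exists_common_sub a₀ (Ds i) (Ds j) hp hq
      exact hne i j hij (myCyclicEq_trans (myCyclicEq_symm (hmin i E hE1)) (hmin j E hE2))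
    · intro i
      refine le_trans (part2le (Ds i) ⟨0, (Ds i).r_pos⟩) (measure_mono ?_)
      exact Set.subset_iUnion (Ds i).U _

end
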